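/- Let (X,G) be a minimal dynamical system where X is a compact metric space with metric d compatible with its topology. Then the action (X,G) is locally quasi-analytic if and only if there exists an almost normal subgroup H of G such that X_H equals the set of points of X with trivial holonomy (equivalently: the stabilizers of all points without holonomy are conjugate to one another and are almost normal subgroups of G). -/

import Mathlib

/-- The conjugate subgroup `g H g⁻¹`. -/
def conjSubgroup {G : Type*} [Group G] (g : G) (H : Subgroup G) : Subgroup G :=
  Subgroup.map (MulAut.conj g).toMonoidHom H

/-- The set `X_H` of points of `X` whose stabilizer is conjugate to `H`. -/
def setXH (G : Type*) {X : Type*} [Group G] [MulAction G X] (H : Subgroup G) : Set X :=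
  {x : X | ∃ g : G, MulAction.stabilizer G x = conjSubgroup g H}

/-- A point `x` has trivial holonomy if every element of its stabilizer fixes pointwise
some open neighborhood of `x`. -/
def TrivialHolonomy (G : Type*) {X : Type*} [Group G] [TopologicalSpace X] [MulAction G X]
    (x : X) : Prop :=
  ∀ g ∈ MulAction.stabilizer G x, ∃ U : Set X, IsOpen U ∧ x ∈ U ∧ ∀ y ∈ U, g • y = y

/-- An action of `G` on a metric space `X` is locally quasi-analytic if there is `ε > 0` such
that for every open `U` of diameter `< ε`, every `g ∈ G` and every nonempty open `V ⊆ U`, if `g`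
fixes `V` pointwise then `g` fixes `U` pointwise. -/
def IsLocallyQuasiAnalytic (G X : Type*) [Group G] [MetricSpace X] [MulAction G X] : Prop :=
  ∃ ε : ℝ, 0 < ε ∧ ∀ U : Set X, IsOpen U → Metric.diam U < ε →
    ∀ g : G, ∀ V : Set X, V ⊆ U → V.Nonempty → IsOpen V →
      (∀ y ∈ V, g • y = y) → ∀ y ∈ U, g • y = y

set_option linter.unusedSectionVars false
set_option maxHeartbeats 1000000

open Pointwise

namespace StmtAux

section GroupAux

variable {G : Type*} [Group G]


variable {G : Type*} [Group G]

lemma mem_conjSubgroup {g x : G} {H : Subgroup G} :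
    x ∈ conjSubgroup g H ↔ ∃ h ∈ H, g * h * g⁻¹ = x := by
  simp [conjSubgroup, Subgroup.mem_map, MulAut.conj_apply]

lemma conjSubgroup_conjSubgroup (a b : G) (H : Subgroup G) :
    conjSubgroup a (conjSubgroup b H) = conjSubgroup (a * b) H := by
  ext x
  simp only [mem_conjSubgroup]
  constructor
  · rintro ⟨y, ⟨h, hh, rfl⟩, rfl⟩
    exact ⟨h, hh, by group⟩
  · rintro ⟨h, hh, rfl⟩
    exact ⟨b * h * b⁻¹, ⟨h, hh, rfl⟩, by group⟩

lemma conjSubgroup_one (H : Subgroup G) : conjSubgroup (1 : G) H = H := by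
  ext x; simp [mem_conjSubgroup]

lemma conjSubgroup_mono (g : G) {H K : Subgroup G} (h : H ≤ K) :
    conjSubgroup g H ≤ conjSubgroup g K :=
  Subgroup.map_mono h

lemma conjSubgroup_eq_self_iff {g : G} {H : Subgroup G} :
    conjSubgroup g H = H ↔ g ∈ (Subgroup.normalizer (H : Set G)) := by
  constructor
  · intro he
    rw [Subgroup.mem_normalizer_iff]
    intro h
    constructor
    · intro hh
      rw [← he]; exact mem_conjSubgroup.2 ⟨h, hh, rfl⟩
    · intro hh
      rw [← he] at hh
      rcases mem_conjSubgroup.1 hh with ⟨h', hh', he'⟩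
      have hh'' : h' = h := by
        have := mul_left_cancel (mul_right_cancel he')
        exact this
      exact hh'' ▸ hh'
  · intro hn
    ext x
    rw [mem_conjSubgroup]
    constructor
    · rintro ⟨h, hh, rfl⟩
      exact (Subgroup.mem_normalizer_iff.1 hn h).1 hh
    · intro hx
      exact ⟨g⁻¹ * x * g, by
        have := (Subgroup.mem_normalizer_iff.1 ((Subgroup.normalizer (H : Set G)).inv_mem hn) x).1 hx
        simpa [mul_assoc] using this, by group⟩

lemma conjSubgroup_eq_iff {a b : G} {H : Subgroup G} :
    conjSubgroup a H = conjSubgroup b H ↔ b⁻¹ * a ∈ (Subgroup.normalizer (H : Set G)) := by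
  constructor
  · intro he
    have := congrArg (conjSubgroup b⁻¹) he
    rw [conjSubgroup_conjSubgroup, conjSubgroup_conjSubgroup, inv_mul_cancel,
      conjSubgroup_one] at this
    exact conjSubgroup_eq_self_iff.1 this
  · intro hn
    have := congrArg (conjSubgroup b) (conjSubgroup_eq_self_iff.2 hn)
    rw [conjSubgroup_conjSubgroup] at this
    simpa using this

/-- The well-defined map from `G ⧸ N(H)` sending a coset to the corresponding conjugate. -/
def conjQuot (H : Subgroup G) (q : G ⧸ (Subgroup.normalizer (H : Set G))) : Subgroup G :=
  Quotient.liftOn q (fun b => conjSubgroup b H) (by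
    intro a b hab
    have h : a⁻¹ * b ∈ (Subgroup.normalizer (H : Set G)) := (QuotientGroup.leftRel_apply).1 hab
    exact conjSubgroup_eq_iff.2 (by simpa using (Subgroup.normalizer (H : Set G)).inv_mem h))

@[simp] lemma conjQuot_mk (H : Subgroup G) (b : G) :
    conjQuot H (b : G ⧸ (Subgroup.normalizer (H : Set G))) = conjSubgroup b H := rfl

lemma conjQuot_injective (H : Subgroup G) : Function.Injective (conjQuot H) := by
  intro q q'
  induction q using Quotient.inductionOn with
  | h a =>
  induction q' using Quotient.inductionOn with
  | h b =>
  intro he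
  have : conjSubgroup a H = conjSubgroup b H := he
  exact Quotient.sound ((QuotientGroup.leftRel_apply).2
    (by simpa using (Subgroup.normalizer (H : Set G)).inv_mem (conjSubgroup_eq_iff.1 this)))

lemma range_conjQuot (H : Subgroup G) :
    Set.range (conjQuot H) = Set.range (fun g : G => conjSubgroup g H) := by
  ext K
  constructor
  · rintro ⟨q, rfl⟩
    induction q using Quotient.inductionOn with
    | h a => exact ⟨a, rfl⟩
  · rintro ⟨a, rfl⟩
    exact ⟨(a : G ⧸ (Subgroup.normalizer (H : Set G))), rfl⟩

/-- If a conjugate of `H` is contained in `H` and `H` has finitely many conjugates,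
then the conjugate equals `H`. -/
lemma conjSubgroup_eq_of_le {H : Subgroup G}
    (hfin : (Set.range fun g : G => conjSubgroup g H).Finite)
    {c : G} (hle : conjSubgroup c H ≤ H) : conjSubgroup c H = H := by
  set f : ℕ → Subgroup G := fun n => conjSubgroup (c ^ n) H with hf
  have hmem : ∀ n, f n ∈ Set.range fun g : G => conjSubgroup g H := fun n => ⟨c ^ n, rfl⟩
  have hstep : ∀ n, f (n + 1) ≤ f n := by
    intro n
    have : f (n + 1) = conjSubgroup (c ^ n) (conjSubgroup c H) := by
      rw [hf, conjSubgroup_conjSubgroup, ← pow_succ]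
    rw [this]
    exact conjSubgroup_mono _ hle
  have hant : Antitone f := antitone_nat_of_succ_le hstep
  have : ∃ n m : ℕ, n ≠ m ∧ f n = f m := by
    haveI : Finite (Set.range fun g : G => conjSubgroup g H) := hfin
    obtain ⟨n, m, hnm, he⟩ := Finite.exists_ne_map_eq_of_infinite
      (fun n : ℕ => (⟨f n, hmem n⟩ : Set.range fun g : G => conjSubgroup g H))
    exact ⟨n, m, hnm, by simpa using congrArg Subtype.val he⟩
  obtain ⟨n, m, hnm, he⟩ := this
  wlog hlt : n < m generalizing n m
  · exact this m n hnm.symm he.symm (by omega)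
  have hk : f (m - n) = H := by
    have h1 : conjSubgroup ((c ^ n)⁻¹) (f n) = conjSubgroup ((c ^ n)⁻¹) (f m) :=
      congrArg _ he
    rw [hf] at h1
    simp only [conjSubgroup_conjSubgroup] at h1
    rw [inv_mul_cancel, conjSubgroup_one] at h1
    have h2 : (c ^ n)⁻¹ * c ^ m = c ^ (m - n) := by
      rw [← pow_sub_mul_pow c (le_of_lt hlt)]
      group
    rw [h2] at h1
    exact h1.symm
  have h1le : f 1 ≤ f 0 := hant (by omega)
  have hmle : f (m - n) ≤ f 1 := hant (by omega)
  have hf0 : f 0 = H := by rw [hf]; simp [conjSubgroup_one]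
  have : H ≤ f 1 := hk ▸ hmle
  have hle' : f 1 ≤ H := hf0 ▸ h1le
  have : f 1 = H := le_antisymm hle' this
  simpa [hf, pow_one] using this

lemma conjSubgroup_eq_of_le' {H : Subgroup G}
    (hfin : (Set.range fun g : G => conjSubgroup g H).Finite)
    {u v : G} (h : conjSubgroup u H ≤ conjSubgroup v H) :
    conjSubgroup u H = conjSubgroup v H := by
  have h1 : conjSubgroup (v⁻¹ * u) H ≤ H := by
    have := conjSubgroup_mono v⁻¹ h
    rw [conjSubgroup_conjSubgroup, conjSubgroup_conjSubgroup, inv_mul_cancel,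
      conjSubgroup_one] at this
    exact this
  have h2 := conjSubgroup_eq_of_le hfin h1
  have := congrArg (conjSubgroup v) h2
  rw [conjSubgroup_conjSubgroup] at this
  simpa [mul_assoc] using this


end GroupAux

section DynAux


variable {G X : Type*} [Group G] [MulAction G X]

/-- The fixed-point set of a subgroup. -/
def FixS (K : Subgroup G) : Set X := {x : X | ∀ h ∈ K, h • x = x}

lemma mem_fixS_stabilizer (x : X) : x ∈ FixS (MulAction.stabilizer G x) :=
  fun _ hh => hh

lemma stabilizer_smul (a : G) (x : X) :
    MulAction.stabilizer G (a • x) = conjSubgroup a (MulAction.stabilizer G x) :=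
  MulAction.stabilizer_smul_eq_stabilizer_map_conj a x

lemma fixS_conjSubgroup (b : G) (K : Subgroup G) :
    (FixS (conjSubgroup b K) : Set X) = b • (FixS K : Set X) := by
  ext x
  rw [Set.mem_smul_set_iff_inv_smul_mem]
  constructor
  · intro hx h hh
    have h1 : (b * h * b⁻¹) • x = x := hx _ (mem_conjSubgroup.2 ⟨h, hh, rfl⟩)
    have : b • h • b⁻¹ • x = x := by
      simpa [mul_smul] using h1
    calc h • b⁻¹ • x = b⁻¹ • (b • (h • b⁻¹ • x)) := by rw [inv_smul_smul]
    _ = b⁻¹ • x := by rw [this]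
  · intro hx g hg
    rcases mem_conjSubgroup.1 hg with ⟨h, hh, rfl⟩
    have := hx h hh
    calc (b * h * b⁻¹) • x = b • h • b⁻¹ • x := by rw [mul_smul, mul_smul]
    _ = b • b⁻¹ • x := by rw [this]
    _ = x := smul_inv_smul b x

variable [TopologicalSpace X] [ContinuousConstSMul G X] [T2Space X]

lemma isClosed_fixS (K : Subgroup G) : IsClosed (FixS K : Set X) := by
  have : (FixS K : Set X) = ⋂ h : K, {x : X | (h : G) • x = x} := by
    ext x; simp [FixS]
  rw [this]
  exact isClosed_iInter fun h => isClosed_eq (continuous_const_smul _) continuous_id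

lemma trivialHolonomy_iff (x : X) :
    TrivialHolonomy G x ↔ ∀ g : G, g • x = x → x ∈ interior {y : X | g • y = y} := by
  constructor
  · intro ht g hg
    rcases ht g hg with ⟨U, hUo, hxU, hfix⟩
    exact mem_interior.2 ⟨U, fun y hy => hfix y hy, hUo, hxU⟩
  · intro h g hg
    refine ⟨interior {y : X | g • y = y}, isOpen_interior, h g hg, fun y hy => ?_⟩
    have : y ∈ {y : X | g • y = y} := interior_subset hy
    exact this

lemma trivialHolonomy_smul (a : G) {x : X} (h : TrivialHolonomy G x) :
    TrivialHolonomy G (a • x) := by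
  intro g hg
  have hg' : (a⁻¹ * g * a) ∈ MulAction.stabilizer G x := by
    have hgx : g • a • x = a • x := hg
    simp only [MulAction.mem_stabilizer_iff, mul_smul]
    rw [hgx, inv_smul_smul]
  rcases h _ hg' with ⟨U, hUo, hxU, hfix⟩
  refine ⟨a • U, hUo.smul a, Set.smul_mem_smul_set hxU, ?_⟩
  rintro y ⟨u, hu, rfl⟩
  have := hfix u hu
  calc g • a • u = a • (a⁻¹ * g * a) • u := by
        simp [mul_smul]
  _ = a • u := by rw [this]


end DynAux

section DenseAux


variable {G X : Type*} [Group G] [Countable G] [MetricSpace X] [CompactSpace X]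
  [MulAction G X] [ContinuousConstSMul G X]

lemma dense_trivialHolonomy : Dense {x : X | TrivialHolonomy G x} := by
  have h1 : {x : X | TrivialHolonomy G x} =
      ⋂ g : G, (interior {y : X | g • y = y} ∪ {y : X | g • y = y}ᶜ) := by
    ext x
    simp only [Set.mem_iInter, Set.mem_setOf_eq, trivialHolonomy_iff, Set.mem_union,
      Set.mem_compl_iff]
    constructor
    · intro h g
      by_cases hg : g • x = x
      · exact Or.inl (h g hg)
      · exact Or.inr hg
    · intro h g hg
      rcases h g with h' | h'
      · exact h'
      · exact absurd hg h'
  rw [h1]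
  refine dense_iInter_of_isOpen (fun g => ?_) (fun g => ?_)
  · exact isOpen_interior.union
      (isClosed_eq (continuous_const_smul g) continuous_id).isOpen_compl
  · set F := {y : X | g • y = y} with hF
    have hc : (interior F ∪ Fᶜ)ᶜ = (interior F)ᶜ ∩ F := by
      rw [Set.compl_union, compl_compl]
    have hie : interior ((interior F)ᶜ ∩ F) = ∅ := by
      rw [Set.eq_empty_iff_forall_notMem]
      intro x hx
      have hx1 : x ∈ interior F := interior_mono Set.inter_subset_right hx
      have hx2 : x ∈ (interior F)ᶜ := (interior_subset hx).1
      exact hx2 hx1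
    have := interior_eq_empty_iff_dense_compl.1 hie
    rwa [← hc, compl_compl] at this


end DenseAux

end StmtAux

open StmtAux

/-- Let `(X,G)` be a minimal dynamical system on a compact metric space. Then the action is
locally quasi-analytic if and only if there exists an almost normal subgroup `H` of `G` such that
`X_H` is exactly the set of points with trivial holonomy. -/
theorem stmt6 {G X : Type*} [Group G] [Countable G]
    [MetricSpace X] [CompactSpace X]
    [MulAction G X] [ContinuousConstSMul G X]
    (hmin : ∀ x : X, Dense (MulAction.orbit G x)) :
    IsLocallyQuasiAnalytic G X ↔
      ∃ H : Subgroup G, (Subgroup.normalizer (H : Set G)).FiniteIndex ∧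
        setXH G H = {x : X | TrivialHolonomy G x} := by
  rcases isEmpty_or_nonempty X with hX | hX
  · constructor
    · intro _
      refine ⟨⊤, ⟨?_⟩, ?_⟩
      · have h1 : Subgroup.normalizer ((⊤ : Subgroup G) : Set G) = ⊤ :=
          top_le_iff.1 Subgroup.le_normalizer
        rw [h1, Subgroup.index_top]
        exact one_ne_zero
      · ext x; exact isEmptyElim x
    · intro _
      exact ⟨1, one_pos, fun U _ _ g V _ _ _ _ y hy => isEmptyElim y⟩
  constructor
  · rintro ⟨ε, hε, hlq⟩
    have hT := dense_trivialHolonomy (G := G) (X := X)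
    obtain ⟨x₀, hx₀⟩ : ∃ x : X, TrivialHolonomy G x := hT.nonempty
    set H := MulAction.stabilizer G x₀ with hH
    -- every element of the stabilizer of a trivial-holonomy point fixes the ε/3-ball around it
    have hfb : ∀ x : X, TrivialHolonomy G x → ∀ g ∈ MulAction.stabilizer G x,
        ∀ y ∈ Metric.ball x (ε/3), g • y = y := by
      intro x hx g hg y hy
      rcases hx g hg with ⟨W, hWo, hxW, hWfix⟩
      have hdiam : Metric.diam (Metric.ball x (ε/3)) < ε :=
        lt_of_le_of_lt (Metric.diam_ball (by positivity)) (by linarith)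
      exact hlq (Metric.ball x (ε/3)) Metric.isOpen_ball hdiam g
        (W ∩ Metric.ball x (ε/3)) Set.inter_subset_right
        ⟨x, hxW, Metric.mem_ball_self (by positivity)⟩ (hWo.inter Metric.isOpen_ball)
        (fun z hz => hWfix z hz.1) y hy
    -- trivial-holonomy points at distance < ε/3 have equal stabilizers
    have hsc : ∀ x y : X, TrivialHolonomy G x → TrivialHolonomy G y → dist x y < ε/3 →
        MulAction.stabilizer G x = MulAction.stabilizer G y := by
      intro x y hx hy hxy
      apply le_antisymm
      · intro g hg
        exact hfb x hx g hg y (by rwa [Metric.mem_ball, dist_comm])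
      · intro g hg
        exact hfb y hy g hg x (by rwa [Metric.mem_ball])
    -- the orbit of x₀ approximates any point
    have happrox : ∀ y : X, ∀ r : ℝ, 0 < r → ∃ a : G, dist (a • x₀) y < r := by
      intro y r hr
      rcases Metric.dense_iff.1 (hmin x₀) y r hr with ⟨z, hz1, hz2⟩
      rcases hz2 with ⟨a, rfl⟩
      exact ⟨a, by rwa [Metric.mem_ball] at hz1⟩
    -- finitely many conjugates of H
    have hcover : (Set.univ : Set X) ⊆ ⋃ c : X, Metric.ball c (ε/6) := by
      intro x _
      exact Set.mem_iUnion.2 ⟨x, Metric.mem_ball_self (by positivity)⟩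
    obtain ⟨t, ht⟩ := isCompact_univ.elim_finite_subcover (fun c : X => Metric.ball c (ε/6))
      (fun c => Metric.isOpen_ball) hcover
    choose! a ha using fun c : X => happrox c (ε/6) (by positivity)
    have hkey : ∀ b : G, ∃ c ∈ t, conjSubgroup b H = conjSubgroup (a c) H := by
      intro b
      have hmem : (b • x₀) ∈ ⋃ c ∈ t, Metric.ball c (ε/6) := ht (Set.mem_univ _)
      rcases Set.mem_iUnion₂.1 hmem with ⟨c, hct, hbc⟩
      refine ⟨c, hct, ?_⟩
      have hd : dist (b • x₀) ((a c) • x₀) < ε/3 := by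
        have h1 : dist (b • x₀) c < ε/6 := hbc
        have h2 := ha c
        calc dist (b • x₀) ((a c) • x₀)
            ≤ dist (b • x₀) c + dist c ((a c) • x₀) := dist_triangle _ _ _
        _ < ε/6 + ε/6 := by rw [dist_comm c]; linarith
        _ = ε/3 := by ring
      calc conjSubgroup b H = MulAction.stabilizer G (b • x₀) := (stabilizer_smul b x₀).symm
      _ = MulAction.stabilizer G ((a c) • x₀) :=
          hsc _ _ (trivialHolonomy_smul b hx₀) (trivialHolonomy_smul (a c) hx₀) hd
      _ = conjSubgroup (a c) H := stabilizer_smul (a c) x₀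
    have hSfin : (Set.range fun g : G => conjSubgroup g H).Finite := by
      have hsub : (Set.range fun g : G => conjSubgroup g H) ⊆
          (fun c => conjSubgroup (a c) H) '' (t : Set X) := by
        rintro K ⟨b, rfl⟩
        rcases hkey b with ⟨c, hct, he⟩
        exact ⟨c, hct, he.symm⟩
      exact Set.Finite.subset ((t : Set X).toFinite.image _) hsub
    have hQfin : Finite (G ⧸ (Subgroup.normalizer (H : Set G))) := by
      have hfin : Set.Finite (Set.range (conjQuot H)) := by
        rw [range_conjQuot]; exact hSfin
      haveI := hfin.to_subtype
      exact Finite.of_injective (Set.rangeFactorization (conjQuot H))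
        fun q q' h => conjQuot_injective H (congrArg Subtype.val h)
    haveI := hQfin
    have hFI : (Subgroup.normalizer (H : Set G)).FiniteIndex := Subgroup.finiteIndex_of_finite_quotient
    refine ⟨H, hFI, ?_⟩
    ext y
    simp only [setXH, Set.mem_setOf_eq]
    constructor
    · rintro ⟨u, hu⟩
      intro g hg
      obtain ⟨b, hb⟩ := happrox y (ε/3) (by positivity)
      have hbT := trivialHolonomy_smul b hx₀
      have hbst : MulAction.stabilizer G (b • x₀) = conjSubgroup b H := stabilizer_smul b x₀
      have hle : conjSubgroup b H ≤ conjSubgroup u H := by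
        rw [← hu, ← hbst]
        intro h hh
        exact hfb (b • x₀) hbT h hh y (by rwa [Metric.mem_ball, dist_comm])
      have heq2 := conjSubgroup_eq_of_le' hSfin hle
      have hstab_eq : MulAction.stabilizer G y = MulAction.stabilizer G (b • x₀) := by
        rw [hu, hbst, heq2]
      refine ⟨Metric.ball (b • x₀) (ε/3), Metric.isOpen_ball,
        by rwa [Metric.mem_ball, dist_comm], ?_⟩
      intro z hz
      exact hfb (b • x₀) hbT g (hstab_eq ▸ hg) z hz
    · intro hy
      obtain ⟨b, hb⟩ := happrox y (ε/3) (by positivity)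
      refine ⟨b, ?_⟩
      calc MulAction.stabilizer G y
          = MulAction.stabilizer G (b • x₀) :=
            (hsc (b • x₀) y (trivialHolonomy_smul b hx₀) hy hb).symm
      _ = conjSubgroup b H := stabilizer_smul b x₀
  · rintro ⟨H, hFI, heq⟩
    haveI := hFI
    have hSfin : (Set.range fun g : G => conjSubgroup g H).Finite := by
      rw [← range_conjQuot]
      exact Set.finite_range _
    haveI hSsub := hSfin.to_subtype
    have hT := dense_trivialHolonomy (G := G) (X := X)
    obtain ⟨x₀, hx₀⟩ : ∃ x : X, TrivialHolonomy G x := hT.nonempty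
    have hx₀XH : x₀ ∈ setXH G H := by rw [heq]; exact hx₀
    obtain ⟨g₀, hg₀⟩ := hx₀XH
    set 𝒞 : Set (Subgroup G) := Set.range fun g : G => conjSubgroup g H with h𝒞
    have hcl : ∀ K : 𝒞, IsClosed (FixS (K : Subgroup G) : Set X) := fun K => isClosed_fixS _
    have hmemC : ∀ c : G, MulAction.stabilizer G (c • x₀) ∈ 𝒞 := by
      intro c
      rw [stabilizer_smul, hg₀, conjSubgroup_conjSubgroup]
      exact ⟨c * g₀, rfl⟩
    have huniv : (⋃ K : 𝒞, (FixS (K : Subgroup G) : Set X)) = Set.univ := by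
      apply Set.eq_univ_of_univ_subset
      have horb : MulAction.orbit G x₀ ⊆ ⋃ K : 𝒞, (FixS (K : Subgroup G) : Set X) := by
        rintro z ⟨c, rfl⟩
        exact Set.mem_iUnion.2 ⟨⟨_, hmemC c⟩, mem_fixS_stabilizer _⟩
      have hclU : IsClosed (⋃ K : 𝒞, (FixS (K : Subgroup G) : Set X)) :=
        isClosed_iUnion_of_finite hcl
      calc (Set.univ : Set X) = closure (MulAction.orbit G x₀) := ((hmin x₀).closure_eq).symm
      _ ⊆ closure (⋃ K : 𝒞, (FixS (K : Subgroup G) : Set X)) := closure_mono horb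
      _ = ⋃ K : 𝒞, (FixS (K : Subgroup G) : Set X) := hclU.closure_eq
    have hint : ∃ K : 𝒞, (interior (FixS (K : Subgroup G) : Set X)).Nonempty :=
      nonempty_interior_of_iUnion_of_closed (fun K : 𝒞 => hcl K) huniv
    have hE : (⋃ K : 𝒞, interior (FixS (K : Subgroup G) : Set X)) = Set.univ := by
      by_contra hne
      have hz : ∃ z : X, z ∉ ⋃ K : 𝒞, interior (FixS (K : Subgroup G) : Set X) := by
        by_contra h
        push_neg at h
        exact hne (Set.eq_univ_of_forall h)
      obtain ⟨z, hz⟩ := hz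
      have horb : ∀ c : G, (c • z) ∉ ⋃ K : 𝒞, interior (FixS (K : Subgroup G) : Set X) := by
        intro c hc
        rcases Set.mem_iUnion.1 hc with ⟨K, hK⟩
        apply hz
        have hKc : conjSubgroup c⁻¹ (K : Subgroup G) ∈ 𝒞 := by
          rcases K.2 with ⟨g, hg⟩
          rw [← hg, conjSubgroup_conjSubgroup]
          exact ⟨c⁻¹ * g, rfl⟩
        refine Set.mem_iUnion.2 ⟨⟨_, hKc⟩, ?_⟩
        have hopen : IsOpen (c⁻¹ • interior (FixS (K : Subgroup G) : Set X)) :=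
          isOpen_interior.smul c⁻¹
        have hsub : c⁻¹ • interior (FixS (K : Subgroup G) : Set X) ⊆
            FixS (conjSubgroup c⁻¹ (K : Subgroup G)) := by
          rw [fixS_conjSubgroup]
          exact Set.smul_set_mono interior_subset
        have hzmem : z ∈ c⁻¹ • interior (FixS (K : Subgroup G) : Set X) :=
          ⟨c • z, hK, by simp⟩
        exact interior_maximal hsub hopen hzmem
      rcases hint with ⟨K0, w, hw⟩
      have hEopen : IsOpen (⋃ K : 𝒞, interior (FixS (K : Subgroup G) : Set X)) :=
        isOpen_iUnion fun K => isOpen_interior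
      have hEne : (⋃ K : 𝒞, interior (FixS (K : Subgroup G) : Set X)).Nonempty :=
        ⟨w, Set.mem_iUnion.2 ⟨K0, hw⟩⟩
      obtain ⟨p, hp_orbit, hpE⟩ := (hmin z).exists_mem_open hEopen hEne
      rcases hp_orbit with ⟨c, rfl⟩
      exact horb c (by simpa using hpE)
    obtain ⟨δ, hδ, hleb⟩ := lebesgue_number_lemma_of_metric isCompact_univ
      (fun K : 𝒞 => isOpen_interior) (by rw [hE])
    refine ⟨δ, hδ, ?_⟩
    intro U hUo hUd g V hVU hVne hVo hVfix y hy
    obtain ⟨v, hv⟩ := hVne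
    have hvU : v ∈ U := hVU hv
    have hUb : U ⊆ Metric.ball v δ := by
      intro u hu
      rw [Metric.mem_ball]
      calc dist u v ≤ Metric.diam U :=
            Metric.dist_le_diam_of_mem (isCompact_univ.isBounded.subset (Set.subset_univ U)) hu hvU
      _ < δ := hUd
    obtain ⟨K, hK⟩ := hleb v (Set.mem_univ v)
    have hUK : U ⊆ (FixS (K : Subgroup G) : Set X) := fun u hu => interior_subset (hK (hUb hu))
    obtain ⟨x, hxT, hxV⟩ := hT.exists_mem_open hVo ⟨v, hv⟩
    have hgx : g ∈ MulAction.stabilizer G x := hVfix x hxV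
    have hxXH : x ∈ setXH G H := by rw [heq]; exact hxT
    rcases hxXH with ⟨u, hu⟩
    rcases K.2 with ⟨b, hb⟩
    have hb' : conjSubgroup b H = (K : Subgroup G) := hb
    have hKle : (K : Subgroup G) ≤ MulAction.stabilizer G x := by
      intro h hh
      exact hUK (hVU hxV) h hh
    have hle : conjSubgroup b H ≤ conjSubgroup u H := by
      rw [hb', ← hu]
      exact hKle
    have heq3 := conjSubgroup_eq_of_le' hSfin hle
    have hgK : g ∈ (K : Subgroup G) := by
      have hKeq : (K : Subgroup G) = MulAction.stabilizer G x := by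
        rw [← hb', heq3, ← hu]
      rw [hKeq]
      exact hgx
    exact hUK hy g hgK
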